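/- Let A ∈ ℝ^{n×n} be an invertible square payoff matrix with largest singular value σ, let {B_t} ⊂ ℝ^{n×n} satisfy lim_{t→∞} B_t = 0, and let the EG step sizes satisfy α = γ < 1/(2σ). Then the EG iterates X_{t+1} = M_EG(A + B_t) X_t, X_t = (x_t, y_t) ∈ ℝ^{2n}, converge to 0 at an exponential rate: there exist ρ ∈ (0,1) and C > 0 such that ‖X_t‖₂ ≤ C ρ^t for all t; in particular lim_{t→∞} (x_t, y_t) = (0, 0). -/

import Mathlib

open Matrix Filter
set_option maxHeartbeats 1000000

/-- Euclidean norm of a real vector. -/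
noncomputable def vnorm2 {ι : Type*} [Fintype ι] (v : ι → ℝ) : ℝ :=
  Real.sqrt (∑ i, v i ^ 2)

/-- Spectral (operator 2-)norm of a real matrix; this is also its largest singular value. -/
noncomputable def mnorm2 {ι κ : Type*} [Fintype ι] [Fintype κ] [DecidableEq κ]
    (M : Matrix ι κ ℝ) : ℝ :=
  ‖LinearMap.toContinuousLinearMap (Matrix.toEuclideanLin M)‖

/-- The extra-gradient (EG) iterative matrix
`M_EG(A) = [[I − αγ A Aᵀ, −α A], [α Aᵀ, I − αγ Aᵀ A]]`. -/
noncomputable def MEG {n m : ℕ} (α γ : ℝ) (A : Matrix (Fin n) (Fin m) ℝ) :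
    Matrix (Fin n ⊕ Fin m) (Fin n ⊕ Fin m) ℝ :=
  fromBlocks (1 - (α * γ) • (A * Aᵀ)) ((-α) • A) (α • Aᵀ) (1 - (α * γ) • (Aᵀ * A))

lemma vnorm2_nonneg {ι : Type*} [Fintype ι] (v : ι → ℝ) : 0 ≤ vnorm2 v := Real.sqrt_nonneg _

lemma vnorm2_eq_norm {ι : Type*} [Fintype ι] (v : ι → ℝ) :
    vnorm2 v = ‖(WithLp.equiv 2 (ι → ℝ)).symm v‖ := by
  rw [EuclideanSpace.norm_eq]
  simp only [vnorm2, WithLp.equiv_symm_apply, WithLp.ofLp_toLp, Real.norm_eq_abs, sq_abs]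

lemma vnorm2_sq {ι : Type*} [Fintype ι] (v : ι → ℝ) : vnorm2 v ^ 2 = v ⬝ᵥ v := by
  rw [vnorm2, Real.sq_sqrt (by positivity)]
  simp [dotProduct, sq]

lemma mnorm2_nonneg {ι κ : Type*} [Fintype ι] [Fintype κ] [DecidableEq κ]
    (M : Matrix ι κ ℝ) : 0 ≤ mnorm2 M := norm_nonneg _

lemma vnorm2_mulVec_le {ι κ : Type*} [Fintype ι] [Fintype κ] [DecidableEq κ]
    (M : Matrix ι κ ℝ) (v : κ → ℝ) :
    vnorm2 (M *ᵥ v) ≤ mnorm2 M * vnorm2 v := by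
  rw [vnorm2_eq_norm, vnorm2_eq_norm]
  have : (WithLp.equiv 2 (ι → ℝ)).symm (M *ᵥ v)
      = (LinearMap.toContinuousLinearMap (Matrix.toEuclideanLin M))
          ((WithLp.equiv 2 (κ → ℝ)).symm v) := by
    rfl
  rw [this]
  exact (LinearMap.toContinuousLinearMap (Matrix.toEuclideanLin M)).le_opNorm _

lemma mnorm2_le_of_forall {ι κ : Type*} [Fintype ι] [Fintype κ] [DecidableEq κ]
    (M : Matrix ι κ ℝ) (r : ℝ) (hr : 0 ≤ r)
    (h : ∀ v : κ → ℝ, vnorm2 (M *ᵥ v) ≤ r * vnorm2 v) : mnorm2 M ≤ r := by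
  apply ContinuousLinearMap.opNorm_le_bound _ hr
  intro w
  have h2 := h ((WithLp.equiv 2 (κ → ℝ)) w)
  rw [vnorm2_eq_norm, vnorm2_eq_norm, Equiv.symm_apply_apply] at h2
  have h3 : (LinearMap.toContinuousLinearMap (Matrix.toEuclideanLin M)) w
      = (WithLp.equiv 2 (ι → ℝ)).symm (M *ᵥ ((WithLp.equiv 2 (κ → ℝ)) w)) := rfl
  rw [h3]
  exact h2

lemma mnorm2_transpose {ι κ : Type*} [Fintype ι] [Fintype κ] [DecidableEq κ] [DecidableEq ι]
    (M : Matrix ι κ ℝ) : mnorm2 Mᵀ = mnorm2 M := by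
  have h1 : Mᵀ = Mᴴ := by ext i j; simp [Matrix.conjTranspose]
  rw [mnorm2, h1, Matrix.toEuclideanLin_conjTranspose_eq_adjoint,
    LinearMap.adjoint_toContinuousLinearMap]
  rw [mnorm2]
  exact LinearIsometryEquiv.norm_map ContinuousLinearMap.adjoint _

lemma dp_transfer {ι κ : Type*} [Fintype ι] [Fintype κ]
    (M : Matrix ι κ ℝ) (a : κ → ℝ) (b : ι → ℝ) :
    (M *ᵥ a) ⬝ᵥ b = a ⬝ᵥ (Mᵀ *ᵥ b) := by
  rw [dotProduct_comm, dotProduct_mulVec, ← Matrix.mulVec_transpose,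
    dotProduct_comm]

lemma expand_key {n : ℕ} (A : Matrix (Fin n) (Fin n) ℝ) (α : ℝ) (x y p q : Fin n → ℝ)
    (hp : p = Aᵀ *ᵥ x) (hq : q = A *ᵥ y) :
    (x - (α*α) • (A *ᵥ p) - α • q) ⬝ᵥ (x - (α*α) • (A *ᵥ p) - α • q)
    + (α • p + (y - (α*α) • (Aᵀ *ᵥ q))) ⬝ᵥ (α • p + (y - (α*α) • (Aᵀ *ᵥ q)))
    = x ⬝ᵥ x + y ⬝ᵥ y - α^2*(p ⬝ᵥ p) - α^2*(q ⬝ᵥ q)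
      + α^4 * ((A *ᵥ p) ⬝ᵥ (A *ᵥ p)) + α^4 * ((Aᵀ *ᵥ q) ⬝ᵥ (Aᵀ *ᵥ q)) := by
  have h1 : (A *ᵥ p) ⬝ᵥ x = p ⬝ᵥ p := by rw [dp_transfer, ← hp]
  have h2 : x ⬝ᵥ (A *ᵥ p) = p ⬝ᵥ p := by rw [dotProduct_comm, h1]
  have h3 : q ⬝ᵥ x = p ⬝ᵥ y := by
    rw [hq, dp_transfer, ← hp, dotProduct_comm]
  have h4 : x ⬝ᵥ q = p ⬝ᵥ y := by rw [dotProduct_comm, h3]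
  have h5 : y ⬝ᵥ p = p ⬝ᵥ y := by rw [dotProduct_comm]
  have h6 : (A *ᵥ p) ⬝ᵥ q = p ⬝ᵥ (Aᵀ *ᵥ q) := by rw [dp_transfer]
  have h7 : q ⬝ᵥ (A *ᵥ p) = p ⬝ᵥ (Aᵀ *ᵥ q) := by rw [dotProduct_comm, h6]
  have h8 : (Aᵀ *ᵥ q) ⬝ᵥ p = p ⬝ᵥ (Aᵀ *ᵥ q) := by rw [dotProduct_comm]
  have h9 : (Aᵀ *ᵥ q) ⬝ᵥ y = q ⬝ᵥ q := by
    rw [dp_transfer, Matrix.transpose_transpose, ← hq, dotProduct_comm]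
  have h10 : y ⬝ᵥ (Aᵀ *ᵥ q) = q ⬝ᵥ q := by rw [dotProduct_comm, h9]
  simp only [sub_dotProduct, dotProduct_sub, add_dotProduct,
    dotProduct_add, smul_dotProduct, dotProduct_smul, smul_eq_mul]
  rw [h1, h2, h3, h4, h5, h6, h7, h8, h9, h10]
  ring

lemma dp_sum_split {ι κ : Type*} [Fintype ι] [Fintype κ] (u w : ι ⊕ κ → ℝ) :
    u ⬝ᵥ w = (u ∘ Sum.inl) ⬝ᵥ (w ∘ Sum.inl) + (u ∘ Sum.inr) ⬝ᵥ (w ∘ Sum.inr) := by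
  simp [dotProduct, Fintype.sum_sum_type]

/-- Main contraction estimate, with abstracted constants. -/
lemma contraction_aux {n : ℕ} (A : Matrix (Fin n) (Fin n) ℝ) (α σ c : ℝ)
    (hα : 0 < α) (hcpos : 0 < c) (hcσ : c ≤ σ) (h2ασ : 2 * α * σ < 1)
    (hup : ∀ v : Fin n → ℝ, vnorm2 (A *ᵥ v) ≤ σ * vnorm2 v)
    (hupT : ∀ v : Fin n → ℝ, vnorm2 (Aᵀ *ᵥ v) ≤ σ * vnorm2 v)
    (hAT : ∀ x : Fin n → ℝ, c * vnorm2 x ≤ vnorm2 (Aᵀ *ᵥ x))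
    (hAL : ∀ y : Fin n → ℝ, c * vnorm2 y ≤ vnorm2 (A *ᵥ y)) :
    ∃ ρ₀ ∈ Set.Ioo (0:ℝ) 1, ∀ z : Fin n ⊕ Fin n → ℝ,
      vnorm2 ((MEG α α A) *ᵥ z) ≤ ρ₀ * vnorm2 z := by
  have hσpos : 0 < σ := lt_of_lt_of_le hcpos hcσ
  have hαc : α * c < 1/2 := by nlinarith [mul_le_mul_of_nonneg_left hcσ hα.le]
  have hα2c2 : α^2 * c^2 < 1/4 := by nlinarith [mul_pos hα hcpos]
  have hρsq_pos : 0 < 1 - (3/4) * α^2 * c^2 := by nlinarith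
  have hρsq_lt1 : 1 - (3/4) * α^2 * c^2 < 1 := by
    nlinarith [mul_pos (mul_pos hα hα) (mul_pos hcpos hcpos)]
  refine ⟨Real.sqrt (1 - (3/4) * α^2 * c^2), ⟨Real.sqrt_pos.mpr hρsq_pos, ?_⟩, ?_⟩
  · have := Real.sqrt_lt_sqrt hρsq_pos.le hρsq_lt1
    simpa using this
  intro z
  have hblock : (MEG α α A) *ᵥ z
      = Sum.elim ((z ∘ Sum.inl) - (α*α) • (A *ᵥ (Aᵀ *ᵥ (z ∘ Sum.inl))) - α • (A *ᵥ (z ∘ Sum.inr)))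
          (α • (Aᵀ *ᵥ (z ∘ Sum.inl)) + ((z ∘ Sum.inr) - (α*α) • (Aᵀ *ᵥ (A *ᵥ (z ∘ Sum.inr))))) := by
    rw [MEG, Matrix.fromBlocks_mulVec]
    rw [Matrix.sub_mulVec, Matrix.sub_mulVec, Matrix.one_mulVec, Matrix.one_mulVec,
      Matrix.smul_mulVec, Matrix.smul_mulVec, Matrix.smul_mulVec,
      Matrix.smul_mulVec, ← Matrix.mulVec_mulVec, ← Matrix.mulVec_mulVec,
      neg_smul, ← sub_eq_add_neg]
  -- squared estimate
  set x : Fin n → ℝ := z ∘ Sum.inl with hx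
  set y : Fin n → ℝ := z ∘ Sum.inr with hy
  set p : Fin n → ℝ := Aᵀ *ᵥ x with hp
  set q : Fin n → ℝ := A *ᵥ y with hq
  have hsq : vnorm2 ((MEG α α A) *ᵥ z) ^ 2 ≤ (1 - (3/4) * α^2 * c^2) * vnorm2 z ^ 2 := by
    rw [vnorm2_sq, vnorm2_sq, hblock, dp_sum_split]
    simp only [Sum.elim_comp_inl, Sum.elim_comp_inr]
    rw [expand_key A α x y p q hp hq]
    have hσ0 : 0 ≤ σ := hσpos.le
    have hR : (A *ᵥ p) ⬝ᵥ (A *ᵥ p) ≤ σ^2 * (p ⬝ᵥ p) := by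
      rw [← vnorm2_sq, ← vnorm2_sq]
      have := hup p
      nlinarith [vnorm2_nonneg (A *ᵥ p), vnorm2_nonneg p]
    have hS : (Aᵀ *ᵥ q) ⬝ᵥ (Aᵀ *ᵥ q) ≤ σ^2 * (q ⬝ᵥ q) := by
      rw [← vnorm2_sq, ← vnorm2_sq]
      have h := hupT q
      nlinarith [vnorm2_nonneg (Aᵀ *ᵥ q), vnorm2_nonneg q]
    have hP : c^2 * (x ⬝ᵥ x) ≤ p ⬝ᵥ p := by
      rw [← vnorm2_sq, ← vnorm2_sq]
      have h := hAT x
      rw [← hp] at h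
      nlinarith [mul_self_le_mul_self (mul_nonneg hcpos.le (vnorm2_nonneg x)) h]
    have hQ : c^2 * (y ⬝ᵥ y) ≤ q ⬝ᵥ q := by
      rw [← vnorm2_sq, ← vnorm2_sq]
      have h := hAL y
      rw [← hq] at h
      nlinarith [mul_self_le_mul_self (mul_nonneg hcpos.le (vnorm2_nonneg y)) h]
    have hzsplit : z ⬝ᵥ z = x ⬝ᵥ x + y ⬝ᵥ y := dp_sum_split z z
    rw [hzsplit]
    have hxx : (0:ℝ) ≤ x ⬝ᵥ x := by rw [← vnorm2_sq]; positivity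
    have hyy : (0:ℝ) ≤ y ⬝ᵥ y := by rw [← vnorm2_sq]; positivity
    have hpp : (0:ℝ) ≤ p ⬝ᵥ p := by rw [← vnorm2_sq]; positivity
    have hqq : (0:ℝ) ≤ q ⬝ᵥ q := by rw [← vnorm2_sq]; positivity
    have hα2σ2 : α^2 * σ^2 ≤ 1/4 := by
      have h1 : α*σ < 1/2 := by linarith
      nlinarith [mul_pos hα hσpos]
    nlinarith [mul_le_mul_of_nonneg_left hP (sq_nonneg α), mul_le_mul_of_nonneg_left hQ (sq_nonneg α),
      mul_le_mul_of_nonneg_left hR (by positivity : (0:ℝ) ≤ α^4),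
      mul_le_mul_of_nonneg_left hS (by positivity : (0:ℝ) ≤ α^4),
      mul_le_mul_of_nonneg_right hα2σ2 (mul_nonneg (sq_nonneg α) hpp),
      mul_le_mul_of_nonneg_right hα2σ2 (mul_nonneg (sq_nonneg α) hqq)]
  -- take square roots
  have h1 : vnorm2 ((MEG α α A) *ᵥ z) ≤ Real.sqrt ((1 - (3/4) * α^2 * c^2) * vnorm2 z ^ 2) := by
    have := Real.sqrt_le_sqrt hsq
    rwa [Real.sqrt_sq (vnorm2_nonneg _)] at this
  calc vnorm2 ((MEG α α A) *ᵥ z) ≤ Real.sqrt ((1 - (3/4) * α^2 * c^2) * vnorm2 z ^ 2) := h1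
    _ = Real.sqrt (1 - (3/4) * α^2 * c^2) * vnorm2 z := by
        rw [Real.sqrt_mul hρsq_pos.le, Real.sqrt_sq (vnorm2_nonneg _)]

lemma lower_aux (c m t v : ℝ) (hc0 : 0 ≤ c) (hv : v ≤ m * t) (hcm : c * m ≤ 1)
    (ht : 0 ≤ t) : c * v ≤ t := by nlinarith

/-- Main contraction estimate. -/
lemma contraction {n : ℕ} (A : Matrix (Fin n) (Fin n) ℝ) (hA : IsUnit A.det)
    (α : ℝ) (hα : 0 < α) (hσ : 0 < mnorm2 A) (h2ασ : 2 * α * mnorm2 A < 1) :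
    ∃ ρ₀ ∈ Set.Ioo (0:ℝ) 1, mnorm2 (MEG α α A) ≤ ρ₀ := by
  have hm1 : (0:ℝ) ≤ mnorm2 (A⁻¹ᵀ) := mnorm2_nonneg _
  have hm2 : (0:ℝ) ≤ mnorm2 (A⁻¹) := mnorm2_nonneg _
  have hd : (0:ℝ) < 1 + mnorm2 (A⁻¹ᵀ) + mnorm2 (A⁻¹) := by linarith
  have hinv : (0:ℝ) < (1 + mnorm2 (A⁻¹ᵀ) + mnorm2 (A⁻¹))⁻¹ := inv_pos.mpr hd
  set c : ℝ := min ((1 + mnorm2 (A⁻¹ᵀ) + mnorm2 (A⁻¹))⁻¹) (mnorm2 A) with hc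
  have hmin : c ≤ (1 + mnorm2 (A⁻¹ᵀ) + mnorm2 (A⁻¹))⁻¹ := min_le_left _ _
  have hmul : (1 + mnorm2 (A⁻¹ᵀ) + mnorm2 (A⁻¹))⁻¹ * (1 + mnorm2 (A⁻¹ᵀ) + mnorm2 (A⁻¹)) = 1 :=
    inv_mul_cancel₀ (ne_of_gt hd)
  have hcpos : 0 < c := lt_min hinv hσ
  have hcσ : c ≤ mnorm2 A := min_le_right _ _
  have hcm1 : c * mnorm2 (A⁻¹ᵀ) ≤ 1 := by
    calc c * mnorm2 (A⁻¹ᵀ)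
        ≤ (1 + mnorm2 (A⁻¹ᵀ) + mnorm2 (A⁻¹))⁻¹ * (1 + mnorm2 (A⁻¹ᵀ) + mnorm2 (A⁻¹)) :=
          mul_le_mul hmin (by linarith) hm1 hinv.le
      _ = 1 := hmul
  have hcm2 : c * mnorm2 (A⁻¹) ≤ 1 := by
    calc c * mnorm2 (A⁻¹)
        ≤ (1 + mnorm2 (A⁻¹ᵀ) + mnorm2 (A⁻¹))⁻¹ * (1 + mnorm2 (A⁻¹ᵀ) + mnorm2 (A⁻¹)) :=
          mul_le_mul hmin (by linarith) hm2 hinv.le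
      _ = 1 := hmul
  have hAT : ∀ x : Fin n → ℝ, c * vnorm2 x ≤ vnorm2 (Aᵀ *ᵥ x) := by
    intro x
    have hxid : A⁻¹ᵀ *ᵥ (Aᵀ *ᵥ x) = x := by
      rw [Matrix.mulVec_mulVec, ← Matrix.transpose_mul, Matrix.mul_nonsing_inv A hA,
        Matrix.transpose_one, Matrix.one_mulVec]
    have h1 : vnorm2 x ≤ mnorm2 (A⁻¹ᵀ) * vnorm2 (Aᵀ *ᵥ x) := by
      conv_lhs => rw [← hxid]
      exact vnorm2_mulVec_le _ _
    exact lower_aux _ _ _ _ hcpos.le h1 hcm1 (vnorm2_nonneg _)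
  have hAL : ∀ y : Fin n → ℝ, c * vnorm2 y ≤ vnorm2 (A *ᵥ y) := by
    intro y
    have hxid : A⁻¹ *ᵥ (A *ᵥ y) = y := by
      rw [Matrix.mulVec_mulVec, Matrix.nonsing_inv_mul A hA, Matrix.one_mulVec]
    have h1 : vnorm2 y ≤ mnorm2 (A⁻¹) * vnorm2 (A *ᵥ y) := by
      conv_lhs => rw [← hxid]
      exact vnorm2_mulVec_le _ _
    exact lower_aux _ _ _ _ hcpos.le h1 hcm2 (vnorm2_nonneg _)
  have hup : ∀ v : Fin n → ℝ, vnorm2 (A *ᵥ v) ≤ mnorm2 A * vnorm2 v :=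
    fun v => vnorm2_mulVec_le A v
  have hupT : ∀ v : Fin n → ℝ, vnorm2 (Aᵀ *ᵥ v) ≤ mnorm2 A * vnorm2 v := by
    intro v
    have := vnorm2_mulVec_le Aᵀ v
    rwa [mnorm2_transpose] at this
  obtain ⟨ρ₀, hρ₀, hbound⟩ :=
    contraction_aux A α (mnorm2 A) c hα hcpos hcσ h2ασ hup hupT hAT hAL
  exact ⟨ρ₀, hρ₀, mnorm2_le_of_forall _ _ hρ₀.1.le hbound⟩

lemma mnorm2_continuous {ι κ : Type*} [Fintype ι] [Fintype κ] [DecidableEq κ] :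
    Continuous (fun M : Matrix ι κ ℝ => mnorm2 M) := by
  have h : Continuous (fun M : Matrix ι κ ℝ =>
      ((LinearMap.toContinuousLinearMap.toLinearMap.comp
        (Matrix.toEuclideanLin (𝕜 := ℝ) (m := ι) (n := κ)).toLinearMap) M)) :=
    LinearMap.continuous_of_finiteDimensional _
  exact continuous_norm.comp h

lemma MEG_continuous {n : ℕ} (α γ : ℝ) :
    Continuous (fun A : Matrix (Fin n) (Fin n) ℝ => MEG α γ A) := by
  unfold MEG
  apply Continuous.matrix_fromBlocks
  · exact continuous_const.sub ((continuous_id.matrix_mul continuous_id.matrix_transpose).const_smul (α * γ))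
  · exact continuous_id.const_smul (-α)
  · exact continuous_id.matrix_transpose.const_smul α
  · exact continuous_const.sub ((continuous_id.matrix_transpose.matrix_mul continuous_id).const_smul (α * γ))

/-- If the stable payoff matrix `A` is an invertible square matrix (with largest singular value
`σ = ‖A‖₂`), `B_t → 0`, and the EG step sizes satisfy `α = γ < 1/(2σ)`, then the EG iterates
`X_{t+1} = M_EG(A + B_t) X_t` converge to `0` at an exponential rate: `‖X_t‖₂ ≤ C·ρ^t` for some
`ρ ∈ (0,1)`, `C > 0`; in particular `(x_t, y_t) → (0, 0)`. -/
theorem stmt16 {n : ℕ} (A : Matrix (Fin n) (Fin n) ℝ) (hA : IsUnit A.det)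
    (B : ℕ → Matrix (Fin n) (Fin n) ℝ) (hB : Tendsto B atTop (nhds 0))
    (α γ : ℝ) (hα : 0 < α) (hαγ : α = γ) (hstep : α < 1 / (2 * mnorm2 A))
    (X : ℕ → ((Fin n ⊕ Fin n) → ℝ))
    (hX : ∀ t, X (t + 1) = (MEG α γ (A + B t)).mulVec (X t)) :
    ∃ ρ ∈ Set.Ioo (0 : ℝ) 1, ∃ C > (0 : ℝ),
      (∀ t : ℕ, vnorm2 (X t) ≤ C * ρ ^ t) ∧
      Tendsto (fun t => vnorm2 (X t)) atTop (nhds 0) := by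
  subst hαγ
  have hσ : 0 < mnorm2 A := by
    rcases (mnorm2_nonneg A).lt_or_eq with h | h
    · exact h
    · exfalso
      rw [← h] at hstep
      norm_num at hstep
      linarith
  have h2ασ : 2 * α * mnorm2 A < 1 := by
    have h2σ : 0 < 2 * mnorm2 A := by linarith
    rw [lt_div_iff₀ h2σ] at hstep
    linarith
  obtain ⟨ρ₀, hρ₀, hMEG⟩ := contraction A hA α hα hσ h2ασ
  set ρ : ℝ := (ρ₀ + 1)/2 with hρdef
  have hρ01 : ρ ∈ Set.Ioo (0:ℝ) 1 := ⟨by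
    have := hρ₀.1
    simp only [hρdef]
    linarith, by
    have := hρ₀.2
    simp only [hρdef]
    linarith⟩
  have hcont : Tendsto (fun t => mnorm2 (MEG α α (A + B t))) atTop
      (nhds (mnorm2 (MEG α α A))) := by
    have h1 : Tendsto (fun t => A + B t) atTop (nhds (A + 0)) := tendsto_const_nhds.add hB
    rw [add_zero] at h1
    have h2 : Continuous (fun M : Matrix (Fin n) (Fin n) ℝ => mnorm2 (MEG α α M)) :=
      mnorm2_continuous.comp (MEG_continuous α α)
    exact (h2.tendsto A).comp h1
  have hev : ∀ᶠ t in atTop, mnorm2 (MEG α α (A + B t)) < ρ :=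
    hcont.eventually_lt_const (by
      have h1 := hρ₀.2
      have : mnorm2 (MEG α α A) ≤ ρ₀ := hMEG
      simp only [hρdef]
      linarith)
  obtain ⟨N, hN⟩ := eventually_atTop.mp hev
  have hstepb : ∀ t, N ≤ t → vnorm2 (X (t+1)) ≤ ρ * vnorm2 (X t) := by
    intro t ht
    rw [hX t]
    calc vnorm2 ((MEG α α (A + B t)) *ᵥ (X t))
        ≤ mnorm2 (MEG α α (A + B t)) * vnorm2 (X t) := vnorm2_mulVec_le _ _
      _ ≤ ρ * vnorm2 (X t) := mul_le_mul_of_nonneg_right (hN t ht).le (vnorm2_nonneg _)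
  have hρN : 0 < ρ^N := pow_pos hρ01.1 N
  have hsum : (0:ℝ) ≤ ∑ t ∈ Finset.range (N+1), vnorm2 (X t) :=
    Finset.sum_nonneg fun i _ => vnorm2_nonneg _
  set C : ℝ := ((∑ t ∈ Finset.range (N+1), vnorm2 (X t)) + 1) / ρ^N with hC
  have hCpos : 0 < C := div_pos (by linarith) hρN
  have hCρN : C * ρ^N = (∑ t ∈ Finset.range (N+1), vnorm2 (X t)) + 1 :=
    div_mul_cancel₀ _ (ne_of_gt hρN)
  have hle : ∀ t, t ≤ N → vnorm2 (X t) ≤ C * ρ^t := by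
    intro t ht
    have h1 : vnorm2 (X t) ≤ ∑ s ∈ Finset.range (N+1), vnorm2 (X s) :=
      Finset.single_le_sum (fun i _ => vnorm2_nonneg _) (Finset.mem_range.mpr (by omega))
    have h2 : C * ρ^N ≤ C * ρ^t :=
      mul_le_mul_of_nonneg_left (pow_le_pow_of_le_one hρ01.1.le hρ01.2.le ht) hCpos.le
    calc vnorm2 (X t) ≤ (∑ s ∈ Finset.range (N+1), vnorm2 (X s)) + 1 := by linarith
      _ = C * ρ^N := hCρN.symm
      _ ≤ C * ρ^t := h2
  have hall : ∀ t, vnorm2 (X t) ≤ C * ρ^t := by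
    intro t
    induction t with
    | zero => exact hle 0 (Nat.zero_le N)
    | succ t ih =>
      rcases le_or_gt (t+1) N with h | h
      · exact hle (t+1) h
      · have hNt : N ≤ t := by omega
        calc vnorm2 (X (t+1)) ≤ ρ * vnorm2 (X t) := hstepb t hNt
          _ ≤ ρ * (C * ρ^t) := mul_le_mul_of_nonneg_left ih hρ01.1.le
          _ = C * ρ^(t+1) := by ring
  refine ⟨ρ, hρ01, C, hCpos, hall, ?_⟩
  have hten : Tendsto (fun t : ℕ => C * ρ^t) atTop (nhds 0) := by
    have h := tendsto_pow_atTop_nhds_zero_of_lt_one hρ01.1.le hρ01.2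
    simpa using h.const_mul C
  exact squeeze_zero (fun t => vnorm2_nonneg _) hall hten
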